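/- Let k be a field, A a bialgebra over k, n ≥ 1, and let q_{ij} ∈ k^× (1 ≤ i, j ≤ n) satisfy: q_{ij} q_{ji} = 1 for all i ≠ j; q_{ii}^2 ≠ 1 for all i; and q_{ii}^2 ≠ q_{jj}^2 for all i ≠ j. Let t_{ij} ∈ A satisfy Δ(t_{ij}) = Σ_{k=1}^n t_{ik} ⊗ t_{kj}, ε(t_{ij}) = δ_{ij}, and the FRT relations q_{kℓ} t_{ik} t_{jℓ} = q_{ij} t_{jℓ} t_{ik} for all i, j, k, ℓ. Let m_1, …, m_n be integers with m_i ≥ 2 for all i (in the paper, m_i = N_i − 1 where q_{ii} is a primitive N_i-th root of unity with N_i ≥ 3). Then the element D := (t_{11})^{m_1} (t_{22})^{m_2} ⋯ (t_{nn})^{m_n} is group-like: Δ(D) = D ⊗ D and ε(D) = 1. -/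

import Mathlib

open scoped TensorProduct

/-- In a ring, if a family `x : Fin n → R` satisfies `x a * x b = 0` unless `a = b = i`,
then `(∑ a, x a) ^ m = (x i) ^ m` for all `m ≥ 2`. -/
private lemma sum_pow_eq_single_pow {R : Type*} [Ring R] {n : ℕ} (x : Fin n → R) (i : Fin n)
    (h : ∀ a b, ¬(a = i ∧ b = i) → x a * x b = 0) :
    ∀ m, 2 ≤ m → (∑ a, x a) ^ m = (x i) ^ m := by
  have hmul : ∀ r : ℕ, 1 ≤ r → (∑ a, x a) * (x i) ^ r = (x i) ^ (r + 1) := by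
    intro r hr
    obtain ⟨s, rfl⟩ := Nat.exists_eq_add_of_le hr
    rw [Finset.sum_mul]
    rw [Fintype.sum_eq_single i]
    · rw [← pow_succ']
    · intro a ha
      rw [pow_add, pow_one, ← mul_assoc]
      rw [h a i (by simp [ha]), zero_mul]
  have hsq : (∑ a, x a) ^ 2 = (x i) ^ 2 := by
    rw [sq, Finset.sum_mul]
    rw [Fintype.sum_eq_single i]
    · rw [Finset.mul_sum, Fintype.sum_eq_single i]
      · rw [sq]
      · intro a ha; exact h i a (by simp [ha])
    · intro a ha
      rw [Finset.mul_sum]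
      refine Finset.sum_eq_zero fun b _ => h a b (by simp [ha])
  intro m hm
  obtain ⟨s, rfl⟩ := Nat.exists_eq_add_of_le hm
  induction s with
  | zero => simpa using hsq
  | succ s ih =>
    have he : 2 + (s + 1) = (2 + s) + 1 := by ring
    calc (∑ a, x a) ^ (2 + (s + 1)) = (∑ a, x a) * (∑ a, x a) ^ (2 + s) := by
          rw [he, pow_succ']
      _ = (∑ a, x a) * (x i) ^ (2 + s) := by rw [ih (by omega)]
      _ = (x i) ^ ((2 + s) + 1) := hmul _ (by omega)
      _ = (x i) ^ (2 + (s + 1)) := by rw [he]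

theorem quantum_determinant_quantum_linear_space_grouplike
    {k : Type*} [Field k] {A : Type*} [Ring A] [Bialgebra k A]
    (n : ℕ) (hn : 1 ≤ n) (q : Fin n → Fin n → k) (hq : ∀ i j, q i j ≠ 0)
    (hqq : ∀ i j, i ≠ j → q i j * q j i = 1)
    (hqii : ∀ i, q i i ^ 2 ≠ 1)
    (hqij : ∀ i j, i ≠ j → q i i ^ 2 ≠ q j j ^ 2)
    (t : Fin n → Fin n → A)
    (hcomul : ∀ i j, Coalgebra.comul (R := k) (t i j) = ∑ m, t i m ⊗ₜ[k] t m j)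
    (hcounit : ∀ i j, Coalgebra.counit (R := k) (t i j) = if i = j then (1 : k) else 0)
    (hFRT : ∀ i j a b, q a b • (t i a * t j b) = q i j • (t j b * t i a))
    (m : Fin n → ℕ) (hm : ∀ i, 2 ≤ m i)
    (D : A) (hD : D = (List.ofFn fun i => t i i ^ m i).prod) :
    Coalgebra.comul (R := k) D = D ⊗ₜ[k] D ∧ Coalgebra.counit (R := k) D = 1 := by
  -- Step A: same-row products of distinct generators vanish
  have hrow : ∀ i a b : Fin n, ¬(a = i ∧ b = i) → t i a * t i b = 0 := by
    intro i a b hab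
    have h1 := hFRT i i a b
    have h2 := hFRT i i b a
    -- q b a • (q a b • (t i a * t i b)) = q i i ^ 2 • (t i a * t i b)
    have key : (q b a * q a b) • (t i a * t i b) = (q i i ^ 2) • (t i a * t i b) := by
      rw [mul_smul, h1, smul_comm, h2, smul_smul, sq, mul_smul]
    have hsub : (q b a * q a b - q i i ^ 2) • (t i a * t i b) = 0 := by
      rw [sub_smul, key, sub_self]
    have hcoef : q b a * q a b - q i i ^ 2 ≠ 0 := by
      rcases eq_or_ne a b with rfl | hne
      · -- then a ≠ i
        have hai : a ≠ i := by tauto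
        have : q a a * q a a = q a a ^ 2 := (sq (q a a)).symm
        rw [this]
        exact sub_ne_zero_of_ne (hqij a i hai).symm.symm
      · rw [hqq b a (Ne.symm hne)]
        exact sub_ne_zero_of_ne (fun h => hqii i h.symm)
    rcases smul_eq_zero.mp hsub with hc | hx
    · exact absurd hc hcoef
    · exact hx
  -- Step B: comul of each diagonal power is a pure tensor power
  have hblock : ∀ i : Fin n,
      Coalgebra.comul (R := k) (t i i ^ m i) = (t i i ^ m i) ⊗ₜ[k] (t i i ^ m i) := by
    intro i
    rw [Bialgebra.comul_pow, hcomul i i]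
    have := sum_pow_eq_single_pow (fun a => t i a ⊗ₜ[k] t a i) i ?_ (m i) (hm i)
    · rw [this, Algebra.TensorProduct.tmul_pow]
    · intro a b hab
      rw [Algebra.TensorProduct.tmul_mul_tmul, hrow i a b hab, TensorProduct.zero_tmul]
  -- Step C: conclude
  subst hD
  constructor
  · have := map_list_prod (Bialgebra.comulAlgHom k A) (List.ofFn fun i => t i i ^ m i)
    rw [show Coalgebra.comul (R := k) (List.ofFn fun i => t i i ^ m i).prod =
        Bialgebra.comulAlgHom k A (List.ofFn fun i => t i i ^ m i).prod from rfl, this,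
      List.map_ofFn]
    have heach : List.ofFn (⇑(Bialgebra.comulAlgHom k A) ∘ fun i => t i i ^ m i)
        = List.ofFn (fun i => (t i i ^ m i) ⊗ₜ[k] (t i i ^ m i)) := by
      refine congrArg List.ofFn (funext fun i => ?_)
      simpa using hblock i
    rw [heach]
    -- product of pure tensors
    have : ∀ (l : List A) (l' : List A) (hl : l.length = l'.length),
        (List.zipWith (fun a b => a ⊗ₜ[k] b) l l').prod = l.prod ⊗ₜ[k] l'.prod := by
      intro l
      induction l with
      | nil => intro l' hl; cases l' with
        | nil => simp [Algebra.TensorProduct.one_def]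
        | cons x xs => simp at hl
      | cons x xs ih =>
        intro l' hl
        cases l' with
        | nil => simp at hl
        | cons y ys =>
          simp only [List.zipWith_cons_cons, List.prod_cons]
          rw [ih ys (by simpa using hl), Algebra.TensorProduct.tmul_mul_tmul]
    have hz : List.ofFn (fun i : Fin n => (t i i ^ m i) ⊗ₜ[k] (t i i ^ m i))
        = List.zipWith (fun a b => a ⊗ₜ[k] b) (List.ofFn fun i => t i i ^ m i)
            (List.ofFn fun i => t i i ^ m i) := by
      rw [List.zipWith_self, List.map_ofFn]
      rfl
    rw [hz, this _ _ rfl]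
  · have := map_list_prod (Bialgebra.counitAlgHom k A) (List.ofFn fun i => t i i ^ m i)
    rw [show Coalgebra.counit (R := k) (List.ofFn fun i => t i i ^ m i).prod =
        Bialgebra.counitAlgHom k A (List.ofFn fun i => t i i ^ m i).prod from rfl, this,
      List.map_ofFn]
    have heach : List.ofFn (⇑(Bialgebra.counitAlgHom k A) ∘ fun i => t i i ^ m i)
        = List.ofFn (fun _ : Fin n => (1 : k)) := by
      refine congrArg List.ofFn (funext fun i => ?_)
      simp [hcounit]
    rw [heach]
    simp
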